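/- Let X be continuous with continuous quadratic variation [X] along grids (T_N), and let φ : [0,∞) → ℝ be continuous. Then for every t > 0, ∑_{t_i, t_{i+1} ∈ T_N, t_{i+1} ≤ t} φ(t_i)(X_{t_{i+1}} − X_{t_i})² converges to the Lebesgue–Stieltjes integral ∫_0^t φ(s) d[X]_s as N → ∞. -/

import Mathlib

open Filter Topology Set MeasureTheory

/-- A refining sequence of time grids: each grid is a strictly increasing
sequence starting at 0 and tending to infinity; grids are nested and the
mesh tends to zero. -/
structure GridSeq where
  T : ℕ → ℕ → ℝ
  zero : ∀ N, T N 0 = 0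
  mono : ∀ N, StrictMono (T N)
  unbounded : ∀ N, Filter.Tendsto (T N) Filter.atTop Filter.atTop
  nested : ∀ N, Set.range (T N) ⊆ Set.range (T (N + 1))
  mesh : ∀ ε > 0, ∃ N₀, ∀ N ≥ N₀, ∀ i, T N (i + 1) - T N i ≤ ε

/-- The grid sum `∑_{t_i, t_{i+1} ∈ τ, t_{i+1} ≤ t} f(t_i, t_{i+1})`. -/
noncomputable def gridSum (τ : ℕ → ℝ) (f : ℝ → ℝ → ℝ) (t : ℝ) : ℝ :=
  ∑' i : ℕ, if τ (i + 1) ≤ t then f (τ i) (τ (i + 1)) else 0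

/-- The grid sums of `f` along the grid sequence `G` converge to `L` at time `t`. -/
def ConvTo (G : GridSeq) (f : ℝ → ℝ → ℝ) (t L : ℝ) : Prop :=
  Filter.Tendsto (fun N => gridSum (G.T N) f t) Filter.atTop (nhds L)

/-- `X` has continuous quadratic variation `Q` along the grid sequence `G`. -/
def HasQV (G : GridSeq) (X Q : ℝ → ℝ) : Prop :=
  ContinuousOn Q (Set.Ici 0) ∧ Q 0 = 0 ∧
    ∀ t, ConvTo G (fun u v => (X v - X u) ^ 2) t (Q t)

/-- `A` is locally of finite variation on `[0,∞)`. -/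
def LocBV (A : ℝ → ℝ) : Prop := ∀ T > 0, BoundedVariationOn A (Set.Icc 0 T)

/-- `ξ` is an admissible integrand for `X`: locally `ξ_t = g(A_t, X_t)` with
`g ∈ C¹` and `A` continuous of finite variation. -/
def Admissible (X ξ : ℝ → ℝ) : Prop :=
  ∀ T > 0, ∃ (n : ℕ) (g : (Fin n → ℝ) → ℝ → ℝ) (A : ℝ → Fin n → ℝ),
    ContDiff ℝ 1 (Function.uncurry g) ∧
    (∀ k, ContinuousOn (fun t => A t k) (Set.Icc 0 T) ∧
      BoundedVariationOn (fun t => A t k) (Set.Icc 0 T)) ∧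
    ∀ t ∈ Set.Icc (0 : ℝ) T, ξ t = g (A t) (X t)

lemma my_ite_sub_ite (a s s' x : ℝ) (hss' : s ≤ s') :
    (if a ≤ s' then x else 0) - (if a ≤ s then x else 0)
      = if s < a ∧ a ≤ s' then x else 0 := by
  split_ifs <;> simp_all <;> linarith

lemma my_partition_sum (s : ℕ → ℝ) (hs : Monotone s) (x a : ℝ) (m : ℕ) :
    (∑ j ∈ Finset.range m, if s j < a ∧ a ≤ s (j+1) then x else 0)
      = if s 0 < a ∧ a ≤ s m then x else 0 := by
  induction m with
  | zero => rw [Finset.sum_range_zero, if_neg]; rintro ⟨h1, h2⟩; linarith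
  | succ m ih =>
      rw [Finset.sum_range_succ, ih]
      have h1 : s 0 ≤ s m := hs (Nat.zero_le m)
      have h2 : s m ≤ s (m+1) := hs (Nat.le_succ m)
      split_ifs <;> simp_all <;> linarith

lemma my_gridSum_eq_sum (τ : ℕ → ℝ) (hτ : StrictMono τ) (f : ℝ → ℝ → ℝ) (t : ℝ)
    (K : ℕ) (hK : t < τ K) :
    gridSum τ f t = ∑ i ∈ Finset.range K, if τ (i+1) ≤ t then f (τ i) (τ (i+1)) else 0 := by
  apply tsum_eq_sum
  intro i hi
  rw [if_neg]
  push_neg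
  exact hK.trans_le (hτ.monotone (Nat.le_succ_of_le (Finset.mem_range.not.mp hi |> Nat.le_of_not_lt)))

/-- weighted quadratic variation sums converge to the
Lebesgue–Stieltjes integral `∫_0^t φ(s) d[X]_s`. -/
theorem stmt4 (G : GridSeq) (X Q φ : ℝ → ℝ)
    (hX : ContinuousOn X (Set.Ici 0)) (hQ : HasQV G X Q)
    (hQc : Continuous Q) (hmono : Monotone Q)
    (hφ : ContinuousOn φ (Set.Ici 0)) :
    ∀ t > 0,
      Filter.Tendsto
        (fun N => gridSum (G.T N) (fun u v => φ u * (X v - X u) ^ 2) t)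
        Filter.atTop
        (nhds (∫ s in Set.Ioc (0 : ℝ) t, φ s
          ∂(StieltjesFunction.mk Q hmono
              (fun _ => hQc.continuousWithinAt)).measure)) := by
  intro t ht
  set SQ : StieltjesFunction ℝ :=
    StieltjesFunction.mk Q hmono (fun _ => hQc.continuousWithinAt) with hSQ
  set μ := SQ.measure with hμ
  set I : ℝ := ∫ x in Set.Ioc (0 : ℝ) t, φ x ∂μ with hI
  have hμIoc : ∀ a b : ℝ, a ≤ b → (μ (Set.Ioc a b)).toReal = Q b - Q a := by
    intro a b hab
    rw [hμ, SQ.measure_Ioc, ENNReal.toReal_ofReal (sub_nonneg.2 (hmono hab))]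
  have hμfin : ∀ a b : ℝ, μ (Set.Ioc a b) < ⊤ := fun a b => by
    rw [hμ, SQ.measure_Ioc]; exact ENNReal.ofReal_lt_top
  have hQ0 : Q 0 = 0 := hQ.2.1
  have hQt : 0 ≤ Q t := hQ0 ▸ hmono ht.le
  have hF : ∀ r : ℝ, Tendsto (fun N => gridSum (G.T N) (fun u v => (X v - X u) ^ 2) r)
      atTop (nhds (Q r)) := fun r => hQ.2.2 r
  rw [Metric.tendsto_atTop]
  intro ε' hε'
  set ε : ℝ := ε' / (4 * (Q t + 1)) with hεdef
  have hε : 0 < ε := div_pos hε' (by linarith)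
  -- uniform continuity of φ on [0, t]
  have hφt : ContinuousOn φ (Set.Icc 0 t) := hφ.mono (fun x hx => hx.1)
  have hucφ : UniformContinuousOn φ (Set.Icc 0 t) :=
    isCompact_Icc.uniformContinuousOn_of_continuous hφt
  rw [Metric.uniformContinuousOn_iff] at hucφ
  obtain ⟨δ, hδ, hφδ⟩ := hucφ ε hε
  -- choose partition of [0, t]
  obtain ⟨m, hm⟩ := exists_nat_gt (2 * t / δ)
  have hm0 : 0 < (m : ℝ) := lt_of_le_of_lt (by positivity) hm
  have hmstep : t / m < δ / 2 := by
    rw [div_lt_div_iff₀ hm0 (by norm_num : (0:ℝ) < 2)]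
    have h2 : 2 * t < (m : ℝ) * δ := (div_lt_iff₀ hδ).mp hm
    linarith
  set s : ℕ → ℝ := fun j => j * (t / m) with hsdef
  have hsmono : Monotone s := fun a b hab =>
    mul_le_mul_of_nonneg_right (Nat.cast_le.2 hab) (by positivity)
  have hs0 : s 0 = 0 := by simp [hsdef]
  have hsm : s m = t := by
    rw [hsdef]; field_simp
  have hstep : ∀ j, s (j+1) - s j = t / m := by
    intro j; rw [hsdef]; push_cast; ring
  have hsmem : ∀ j ≤ m, s j ∈ Set.Icc (0:ℝ) t := fun j hj =>
    ⟨by rw [hsdef]; positivity, hsm ▸ hsmono hj⟩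
  set RS : ℝ := ∑ j ∈ Finset.range m, φ (s j) * (Q (s (j+1)) - Q (s j)) with hRS
  -- Bound 3 : |RS - I| ≤ ε * Q t
  have hIntIcc : IntegrableOn φ (Set.Icc 0 t) μ := hφt.integrableOn_Icc
  have hIntIoc : ∀ a b : ℝ, Set.Ioc a b ⊆ Set.Icc 0 t → IntegrableOn φ (Set.Ioc a b) μ :=
    fun a b hsub => hIntIcc.mono_set hsub
  have hsplit : ∀ k, k ≤ m → (∫ x in Set.Ioc 0 (s k), φ x ∂μ)
      = ∑ j ∈ Finset.range k, ∫ x in Set.Ioc (s j) (s (j+1)), φ x ∂μ := by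
    intro k
    induction k with
    | zero => intro _; simp [hs0]
    | succ k ih =>
        intro hk
        have hk' : k ≤ m := Nat.le_of_succ_le hk
        have h0k : (0:ℝ) ≤ s k := (hsmem k hk').1
        have hkk1 : s k ≤ s (k+1) := hsmono (Nat.le_succ k)
        have hsub1 : Set.Ioc (0:ℝ) (s k) ⊆ Set.Icc 0 t :=
          fun x hx => ⟨hx.1.le, hx.2.trans (hsmem k hk').2⟩
        have hsub2 : Set.Ioc (s k) (s (k+1)) ⊆ Set.Icc 0 t :=
          fun x hx => ⟨h0k.trans hx.1.le, hx.2.trans (hsmem (k+1) hk).2⟩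
        rw [Finset.sum_range_succ, ← ih hk',
          ← MeasureTheory.setIntegral_union (Set.Ioc_disjoint_Ioc_of_le le_rfl) measurableSet_Ioc
            (hIntIoc _ _ hsub1) (hIntIoc _ _ hsub2),
          Set.Ioc_union_Ioc_eq_Ioc h0k hkk1]
  have hB3 : |RS - I| ≤ ε * Q t := by
    have hIeq : I = ∑ j ∈ Finset.range m, ∫ x in Set.Ioc (s j) (s (j+1)), φ x ∂μ := by
      have := hsplit m le_rfl
      rw [hsm] at this
      exact this
    rw [hIeq, hRS, ← Finset.sum_sub_distrib]
    refine (Finset.abs_sum_le_sum_abs _ _).trans ?_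
    have hbound : ∀ j ∈ Finset.range m,
        |φ (s j) * (Q (s (j+1)) - Q (s j)) - ∫ x in Set.Ioc (s j) (s (j+1)), φ x ∂μ|
          ≤ ε * (Q (s (j+1)) - Q (s j)) := by
      intro j hj
      have hjm1 : j + 1 ≤ m := Finset.mem_range.mp hj
      have hjm : j ≤ m := Nat.le_of_succ_le hjm1
      have h0j : (0:ℝ) ≤ s j := (hsmem j hjm).1
      have hjj1 : s j ≤ s (j+1) := hsmono (Nat.le_succ j)
      have hsub : Set.Ioc (s j) (s (j+1)) ⊆ Set.Icc 0 t :=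
        fun x hx => ⟨h0j.trans hx.1.le, hx.2.trans (hsmem _ hjm1).2⟩
      have hμeq : (μ (Set.Ioc (s j) (s (j+1)))).toReal = Q (s (j+1)) - Q (s j) := hμIoc _ _ hjj1
      have key : φ (s j) * (Q (s (j+1)) - Q (s j)) - ∫ x in Set.Ioc (s j) (s (j+1)), φ x ∂μ
          = - ∫ x in Set.Ioc (s j) (s (j+1)), (φ x - φ (s j)) ∂μ := by
        rw [MeasureTheory.integral_sub (hIntIoc _ _ hsub)
          (MeasureTheory.integrableOn_const (hμfin _ _).ne),
          MeasureTheory.setIntegral_const, measureReal_def, hμeq, smul_eq_mul]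
        ring
      rw [key, abs_neg, ← Real.norm_eq_abs]
      have hnorm : ‖∫ x in Set.Ioc (s j) (s (j+1)), (φ x - φ (s j)) ∂μ‖
          ≤ ε * (μ (Set.Ioc (s j) (s (j+1)))).toReal := by
        apply norm_setIntegral_le_of_norm_le_const (hμfin _ _)
        intro x hx
        rw [Real.norm_eq_abs]
        have hx1 : x ∈ Set.Icc (0:ℝ) t := hsub hx
        have hd : dist x (s j) < δ := by
          rw [Real.dist_eq, abs_lt]
          have h1 : s j < x := hx.1
          have h2 : x ≤ s (j+1) := hx.2
          have h3 : s (j+1) - s j = t / m := hstep j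
          constructor <;> linarith
        have := hφδ x hx1 (s j) (hsmem j hjm) hd
        rw [Real.dist_eq] at this
        exact this.le
      calc ‖∫ x in Set.Ioc (s j) (s (j+1)), (φ x - φ (s j)) ∂μ‖
          ≤ ε * (μ (Set.Ioc (s j) (s (j+1)))).toReal := hnorm
        _ = ε * (Q (s (j+1)) - Q (s j)) := by rw [hμeq]
    refine (Finset.sum_le_sum hbound).trans ?_
    rw [← Finset.mul_sum, Finset.sum_range_sub (fun j => Q (s j)), hsm, hs0, hQ0, sub_zero]
  -- Bound 2 : RSN → RS
  set RSN : ℕ → ℝ := fun N => ∑ j ∈ Finset.range m,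
    φ (s j) * (gridSum (G.T N) (fun u v => (X v - X u) ^ 2) (s (j+1))
      - gridSum (G.T N) (fun u v => (X v - X u) ^ 2) (s j)) with hRSN
  have hB2 : Tendsto RSN atTop (nhds RS) := by
    apply tendsto_finset_sum
    intro j _
    exact ((hF (s (j+1))).sub (hF (s j))).const_mul _
  have hEv2 : ∀ᶠ N in atTop, dist (RSN N) RS < ε' / 4 :=
    Metric.tendsto_nhds.mp hB2 (ε' / 4) (by linarith)
  have hEvF : ∀ᶠ N in atTop,
      gridSum (G.T N) (fun u v => (X v - X u) ^ 2) t ≤ Q t + 1 := by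
    filter_upwards [Metric.tendsto_nhds.mp (hF t) 1 one_pos] with N hN
    have := abs_lt.mp (by rwa [Real.dist_eq] at hN)
    linarith [this.1, this.2]
  obtain ⟨N₀, hN₀⟩ := G.mesh (δ / 2) (by linarith)
  have hEvM : ∀ᶠ N in atTop, ∀ i, G.T N (i+1) - G.T N i ≤ δ / 2 :=
    eventually_atTop.2 ⟨N₀, hN₀⟩
  -- Bound 1 : the key estimate
  have hB1 : ∀ N, (∀ i, G.T N (i+1) - G.T N i ≤ δ / 2) →
      |gridSum (G.T N) (fun u v => φ u * (X v - X u) ^ 2) t - RSN N|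
        ≤ ε * gridSum (G.T N) (fun u v => (X v - X u) ^ 2) t := by
    intro N hmesh
    have hτm : StrictMono (G.T N) := G.mono N
    have hτ0 : G.T N 0 = 0 := G.zero N
    obtain ⟨K, hK⟩ := ((G.unbounded N).eventually_gt_atTop t).exists
    set τ : ℕ → ℝ := G.T N with hτdef
    set sq : ℕ → ℝ := fun i => (X (τ (i+1)) - X (τ i)) ^ 2 with hsq
    have hτpos : ∀ i : ℕ, 0 < τ (i+1) := fun i => hτ0 ▸ hτm (Nat.succ_pos i)
    have hGS1 : gridSum τ (fun u v => φ u * (X v - X u) ^ 2) t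
        = ∑ i ∈ Finset.range K, if τ (i+1) ≤ t then φ (τ i) * sq i else 0 :=
      my_gridSum_eq_sum τ hτm _ t K hK
    have hGS2 : ∀ r ≤ t, gridSum τ (fun u v => (X v - X u) ^ 2) r
        = ∑ i ∈ Finset.range K, if τ (i+1) ≤ r then sq i else 0 :=
      fun r hr => my_gridSum_eq_sum τ hτm _ r K (lt_of_le_of_lt hr hK)
    have hRSNeq : RSN N = ∑ i ∈ Finset.range K, ∑ j ∈ Finset.range m,
        if s j < τ (i+1) ∧ τ (i+1) ≤ s (j+1) then φ (s j) * sq i else 0 := by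
      rw [hRSN, Finset.sum_comm]
      apply Finset.sum_congr rfl
      intro j hj
      have hj1 : j + 1 ≤ m := Finset.mem_range.mp hj
      have hjm : j ≤ m := Nat.le_of_succ_le hj1
      rw [hGS2 (s j) (hsmem j hjm).2, hGS2 (s (j+1)) (hsmem (j+1) hj1).2,
        ← Finset.sum_sub_distrib, Finset.mul_sum]
      apply Finset.sum_congr rfl
      intro i _
      rw [my_ite_sub_ite _ _ _ _ (hsmono (Nat.le_succ j)), mul_ite, mul_zero]
    have hSeq : (∑ i ∈ Finset.range K, if τ (i+1) ≤ t then φ (τ i) * sq i else 0)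
        = ∑ i ∈ Finset.range K, ∑ j ∈ Finset.range m,
          if s j < τ (i+1) ∧ τ (i+1) ≤ s (j+1) then φ (τ i) * sq i else 0 := by
      apply Finset.sum_congr rfl
      intro i _
      rw [my_partition_sum s hsmono _ _ m, hs0, hsm]
      simp [hτpos i]
    rw [hGS1, hGS2 t le_rfl, hRSNeq, hSeq, ← Finset.sum_sub_distrib]
    refine (Finset.abs_sum_le_sum_abs _ _).trans ?_
    have hterm : ∀ i ∈ Finset.range K,
        |(∑ j ∈ Finset.range m,
            if s j < τ (i+1) ∧ τ (i+1) ≤ s (j+1) then φ (τ i) * sq i else 0)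
          - ∑ j ∈ Finset.range m,
            if s j < τ (i+1) ∧ τ (i+1) ≤ s (j+1) then φ (s j) * sq i else 0|
          ≤ ε * (if τ (i+1) ≤ t then sq i else 0) := by
      intro i _
      rw [← Finset.sum_sub_distrib]
      refine (Finset.abs_sum_le_sum_abs _ _).trans ?_
      have hjbound : ∀ j ∈ Finset.range m,
          |(if s j < τ (i+1) ∧ τ (i+1) ≤ s (j+1) then φ (τ i) * sq i else 0)
            - if s j < τ (i+1) ∧ τ (i+1) ≤ s (j+1) then φ (s j) * sq i else 0|
          ≤ if s j < τ (i+1) ∧ τ (i+1) ≤ s (j+1) then ε * sq i else 0 := by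
        intro j hj
        have hj1 : j + 1 ≤ m := Finset.mem_range.mp hj
        have hjm : j ≤ m := Nat.le_of_succ_le hj1
        by_cases hc : s j < τ (i+1) ∧ τ (i+1) ≤ s (j+1)
        · have hsqnn : 0 ≤ sq i := by simp only [hsq]; positivity
          rw [if_pos hc, if_pos hc, if_pos hc, ← sub_mul, abs_mul,
            abs_of_nonneg hsqnn]
          apply mul_le_mul_of_nonneg_right _ hsqnn
          have hτi0 : 0 ≤ τ i := hτ0 ▸ hτm.monotone (Nat.zero_le i)
          have h3 : τ i < τ (i+1) := hτm (Nat.lt_succ_self i)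
          have hsj1t : s (j+1) ≤ t := (hsmem (j+1) hj1).2
          have hτit : τ i ≤ t := (h3.trans_le (hc.2.trans hsj1t)).le
          have hd : dist (τ i) (s j) < δ := by
            rw [Real.dist_eq, abs_lt]
            have h1 : τ (i+1) - τ i ≤ δ / 2 := hmesh i
            have h2 : s (j+1) - s j = t / m := hstep j
            constructor <;> linarith [hc.1, hc.2]
          have := hφδ (τ i) ⟨hτi0, hτit⟩ (s j) (hsmem j hjm) hd
          rw [Real.dist_eq] at this
          exact this.le
        · rw [if_neg hc, if_neg hc, if_neg hc]; simp
      refine (Finset.sum_le_sum hjbound).trans ?_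
      rw [my_partition_sum s hsmono (ε * sq i) (τ (i+1)) m, hs0, hsm,
        mul_ite, mul_zero]
      simp [hτpos i]
    refine (Finset.sum_le_sum hterm).trans ?_
    rw [Finset.mul_sum]
  -- Final assembly
  have hfinal : ∀ᶠ N in atTop,
      dist (gridSum (G.T N) (fun u v => φ u * (X v - X u) ^ 2) t) I < ε' := by
    filter_upwards [hEv2, hEvF, hEvM] with N h2 hFt hM
    have h1 := hB1 N hM
    set S := gridSum (G.T N) (fun u v => φ u * (X v - X u) ^ 2) t with hS
    have hFnn : ε * gridSum (G.T N) (fun u v => (X v - X u) ^ 2) t ≤ ε * (Q t + 1) :=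
      mul_le_mul_of_nonneg_left hFt hε.le
    have h2' : |RSN N - RS| < ε' / 4 := by rwa [Real.dist_eq] at h2
    have hε1 : ε * (Q t + 1) = ε' / 4 := by
      rw [hεdef]
      field_simp
    have hε2 : ε * Q t ≤ ε' / 4 := by
      rw [← hε1]
      exact mul_le_mul_of_nonneg_left (by linarith) hε.le
    rw [Real.dist_eq]
    calc |S - I| ≤ |S - RSN N| + |RSN N - I| := abs_sub_le _ _ _
      _ ≤ |S - RSN N| + (|RSN N - RS| + |RS - I|) := by
          linarith [abs_sub_le (RSN N) RS I]
      _ < ε' := by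
          have := h1.trans hFnn
          rw [hε1] at this
          linarith
  obtain ⟨N₁, hN₁⟩ := eventually_atTop.1 hfinal
  exact ⟨N₁, hN₁⟩
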